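/- arXiv:2302.08001 — 2 statements merged into one kernel-verified Lean document; each statement's English description precedes it below -/
import Mathlib

section
/- If f : S × A → ℝ satisfies the Bellman flow constraints (nonnegativity and ∑_a f(s,a) = η(s) + γ ∑_{s'}∑_a P(s|s',a) f(s',a) for all s), then the policy π defined by π(a|s) = f(s,a)/∑_{a'} f(s,a') (for states with ∑_{a'} f(s,a') > 0, arbitrary otherwise) has occupancy measure exactly f, i.e., ρ^π(s,a) = f(s,a) for all s, a. -/
/-- Distribution of the state `s^t` of the Markov chain induced by stationary policy `π`,
transition kernel `P` and initial distribution `η`. -/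
noncomputable def stateDist {S A : Type*} [Fintype S] [Fintype A]
    (P : S → A → S → ℝ) (π : S → A → ℝ) (η : S → ℝ) : ℕ → S → ℝ
  | 0 => η
  | t + 1 => fun s => ∑ s', ∑ a, P s' a s * π s' a * stateDist P π η t s'

/-- Discounted state density `ρ^π(s) = ∑_t γ^t Pr(s^t = s)`. -/
noncomputable def density {S A : Type*} [Fintype S] [Fintype A]
    (P : S → A → S → ℝ) (π : S → A → ℝ) (η : S → ℝ) (γ : ℝ) (s : S) : ℝ :=
  ∑' t : ℕ, γ ^ t * stateDist P π η t s

/-- Discounted occupancy measure `ρ^π(s,a) = ∑_t γ^t Pr(s^t = s, a^t = a)`. -/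
noncomputable def occupancy {S A : Type*} [Fintype S] [Fintype A]
    (P : S → A → S → ℝ) (π : S → A → ℝ) (η : S → ℝ) (γ : ℝ) (s : S) (a : A) : ℝ :=
  ∑' t : ℕ, γ ^ t * (stateDist P π η t s * π s a)

section Aux
variable {S A : Type*} [Fintype S] [Fintype A]
  (P : S → A → S → ℝ) (π : S → A → ℝ) (η : S → ℝ)

lemma stateDist_nonneg (hP0 : ∀ s a s', 0 ≤ P s a s') (hπ0 : ∀ s a, 0 ≤ π s a)
    (hη0 : ∀ s, 0 ≤ η s) : ∀ t s, 0 ≤ stateDist P π η t s := by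
  intro t
  induction t with
  | zero => exact hη0
  | succ t ih =>
    intro s
    refine Finset.sum_nonneg fun s' _ ↦ Finset.sum_nonneg fun a _ ↦ ?_
    exact mul_nonneg (mul_nonneg (hP0 _ _ _) (hπ0 _ _)) (ih s')

lemma stateDist_sum_one (hP1 : ∀ s a, ∑ s', P s a s' = 1) (hπ1 : ∀ s, ∑ a, π s a = 1)
    (hη1 : ∑ s, η s = 1) : ∀ t, ∑ s, stateDist P π η t s = 1 := by
  intro t
  induction t with
  | zero => exact hη1
  | succ t ih =>
    show ∑ s, ∑ s', ∑ a, P s' a s * π s' a * stateDist P π η t s' = 1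
    rw [Finset.sum_comm]
    calc ∑ s', ∑ s, ∑ a, P s' a s * π s' a * stateDist P π η t s'
        = ∑ s', stateDist P π η t s' := by
          refine Finset.sum_congr rfl fun s' _ ↦ ?_
          rw [Finset.sum_comm]
          have : ∀ a, ∑ s, P s' a s * π s' a * stateDist P π η t s'
              = π s' a * stateDist P π η t s' := by
            intro a
            rw [← Finset.sum_mul, ← Finset.sum_mul, hP1, one_mul]
          simp_rw [this, ← Finset.sum_mul, hπ1, one_mul]
      _ = 1 := ih

lemma stateDist_le_one (hP0 : ∀ s a s', 0 ≤ P s a s') (hπ0 : ∀ s a, 0 ≤ π s a)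
    (hη0 : ∀ s, 0 ≤ η s) (hP1 : ∀ s a, ∑ s', P s a s' = 1) (hπ1 : ∀ s, ∑ a, π s a = 1)
    (hη1 : ∑ s, η s = 1) : ∀ t s, stateDist P π η t s ≤ 1 := by
  intro t s
  calc stateDist P π η t s ≤ ∑ s', stateDist P π η t s' :=
        Finset.single_le_sum (fun s' _ ↦ stateDist_nonneg P π η hP0 hπ0 hη0 t s')
          (Finset.mem_univ s)
    _ = 1 := stateDist_sum_one P π η hP1 hπ1 hη1 t

lemma summable_density {γ : ℝ} (hγ0 : 0 < γ) (hγ1 : γ < 1)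
    (hP0 : ∀ s a s', 0 ≤ P s a s') (hπ0 : ∀ s a, 0 ≤ π s a)
    (hη0 : ∀ s, 0 ≤ η s) (hP1 : ∀ s a, ∑ s', P s a s' = 1) (hπ1 : ∀ s, ∑ a, π s a = 1)
    (hη1 : ∑ s, η s = 1) (s : S) :
    Summable (fun t ↦ γ ^ t * stateDist P π η t s) := by
  refine Summable.of_nonneg_of_le
    (fun t ↦ mul_nonneg (pow_nonneg hγ0.le t) (stateDist_nonneg P π η hP0 hπ0 hη0 t s))
    (fun t ↦ ?_) (summable_geometric_of_lt_one hγ0.le hγ1)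
  calc γ ^ t * stateDist P π η t s ≤ γ ^ t * 1 := by
        exact mul_le_mul_of_nonneg_left
          (stateDist_le_one P π η hP0 hπ0 hη0 hP1 hπ1 hη1 t s) (pow_nonneg hγ0.le t)
    _ = γ ^ t := mul_one _

lemma density_bellman {γ : ℝ} (hγ0 : 0 < γ) (hγ1 : γ < 1)
    (hP0 : ∀ s a s', 0 ≤ P s a s') (hπ0 : ∀ s a, 0 ≤ π s a)
    (hη0 : ∀ s, 0 ≤ η s) (hP1 : ∀ s a, ∑ s', P s a s' = 1) (hπ1 : ∀ s, ∑ a, π s a = 1)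
    (hη1 : ∑ s, η s = 1) (s : S) :
    density P π η γ s = η s + γ * ∑ s', ∑ a, P s' a s * π s' a * density P π η γ s' := by
  have hsum := summable_density P π η hγ0 hγ1 hP0 hπ0 hη0 hP1 hπ1 hη1
  have h0 : density P π η γ s
      = γ ^ 0 * stateDist P π η 0 s + ∑' t, γ ^ (t+1) * stateDist P π η (t+1) s :=
    Summable.tsum_eq_zero_add (hsum s)
  rw [h0]
  simp only [pow_zero, one_mul]
  congr 1
  have hrw : ∀ t, γ ^ (t+1) * stateDist P π η (t+1) s
      = γ * ∑ s', ∑ a, P s' a s * π s' a * (γ ^ t * stateDist P π η t s') := by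
    intro t
    show γ ^ (t+1) * (∑ s', ∑ a, P s' a s * π s' a * stateDist P π η t s') = _
    rw [Finset.mul_sum, pow_succ]
    rw [Finset.mul_sum]
    refine Finset.sum_congr rfl fun s' _ ↦ ?_
    rw [Finset.mul_sum, Finset.mul_sum]
    exact Finset.sum_congr rfl fun a _ ↦ by ring
  simp_rw [hrw]
  rw [tsum_mul_left]
  congr 1
  rw [Summable.tsum_finsetSum (fun s' _ ↦ summable_sum fun a _ ↦ ((hsum s').mul_left _))]
  refine Finset.sum_congr rfl fun s' _ ↦ ?_
  rw [Summable.tsum_finsetSum (fun a _ ↦ (hsum s').mul_left _)]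
  refine Finset.sum_congr rfl fun a _ ↦ ?_
  rw [tsum_mul_left]
  rfl

lemma kernel_sum (hP1 : ∀ s a, ∑ s', P s a s' = 1) (hπ1 : ∀ s, ∑ a, π s a = 1)
    (x : S → ℝ) :
    ∑ s, ∑ s', ∑ a, P s' a s * π s' a * x s' = ∑ s', x s' := by
  rw [Finset.sum_comm]
  refine Finset.sum_congr rfl fun s' _ ↦ ?_
  rw [Finset.sum_comm]
  have : ∀ a, ∑ s, P s' a s * π s' a * x s' = π s' a * x s' := by
    intro a
    rw [← Finset.sum_mul, ← Finset.sum_mul, hP1, one_mul]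
  simp_rw [this, ← Finset.sum_mul, hπ1, one_mul]

end Aux

theorem bellman_flow_solution_is_occupancy {S A : Type*} [Fintype S] [Fintype A]
    (P : S → A → S → ℝ) (η : S → ℝ) (γ : ℝ)
    (hγ0 : 0 < γ) (hγ1 : γ < 1)
    (hP0 : ∀ s a s', 0 ≤ P s a s') (hP1 : ∀ s a, ∑ s', P s a s' = 1)
    (hη0 : ∀ s, 0 ≤ η s) (hη1 : ∑ s, η s = 1)
    (f : S → A → ℝ)
    (hf0 : ∀ s a, 0 ≤ f s a)
    (hfBF : ∀ s : S, ∑ a, f s a = η s + γ * ∑ s', ∑ a, P s' a s * f s' a)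
    (π : S → A → ℝ)
    (hπ0 : ∀ s a, 0 ≤ π s a) (hπ1 : ∀ s, ∑ a, π s a = 1)
    -- π is the normalisation of f wherever the state mass is positive
    (hπf : ∀ s a, 0 < ∑ a', f s a' → π s a = f s a / ∑ a', f s a') :
    ∀ s a, occupancy P π η γ s a = f s a := by
  set g : S → ℝ := fun s ↦ ∑ a', f s a' with hgdef
  have hg0 : ∀ s, 0 ≤ g s := fun s ↦ Finset.sum_nonneg fun a _ ↦ hf0 s a
  have hfg : ∀ s a, f s a = π s a * g s := by
    intro s a
    by_cases h : 0 < g s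
    · rw [hπf s a h, div_mul_cancel₀ _ (ne_of_gt h)]
    · have hgz : g s = 0 := le_antisymm (not_lt.mp h) (hg0 s)
      have hfz : f s a = 0 := by
        have := (Finset.sum_eq_zero_iff_of_nonneg (fun a _ ↦ hf0 s a)).mp hgz
        exact this a (Finset.mem_univ a)
      rw [hfz, hgz, mul_zero]
  have hgB : ∀ s, g s = η s + γ * ∑ s', ∑ a, P s' a s * π s' a * g s' := by
    intro s
    rw [hgdef]
    simp only
    rw [hfBF s]
    congr 2
    refine Finset.sum_congr rfl fun s' _ ↦ Finset.sum_congr rfl fun a _ ↦ ?_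
    rw [hfg s' a]; ring
  have hdB := density_bellman P π η hγ0 hγ1 hP0 hπ0 hη0 hP1 hπ1 hη1
  set e : S → ℝ := fun s ↦ density P π η γ s - g s with hedef
  have heB : ∀ s, e s = γ * ∑ s', ∑ a, P s' a s * π s' a * e s' := by
    intro s
    rw [hedef]
    simp only
    rw [hdB s, hgB s]
    rw [add_sub_add_left_eq_sub, ← mul_sub, ← Finset.sum_sub_distrib]
    congr 1
    refine Finset.sum_congr rfl fun s' _ ↦ ?_
    rw [← Finset.sum_sub_distrib]
    refine Finset.sum_congr rfl fun a _ ↦ ?_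
    ring
  have hL : ∑ s, |e s| ≤ γ * ∑ s', |e s'| := by
    calc ∑ s, |e s| ≤ ∑ s, γ * ∑ s', ∑ a, P s' a s * π s' a * |e s'| := by
          refine Finset.sum_le_sum fun s _ ↦ ?_
          rw [heB s, abs_mul, abs_of_pos hγ0]
          refine mul_le_mul_of_nonneg_left ?_ hγ0.le
          calc |∑ s', ∑ a, P s' a s * π s' a * e s'|
              ≤ ∑ s', |∑ a, P s' a s * π s' a * e s'| := Finset.abs_sum_le_sum_abs _ _
            _ ≤ ∑ s', ∑ a, P s' a s * π s' a * |e s'| := by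
                refine Finset.sum_le_sum fun s' _ ↦ ?_
                refine le_trans (Finset.abs_sum_le_sum_abs _ _) ?_
                refine Finset.sum_le_sum fun a _ ↦ ?_
                rw [abs_mul, abs_of_nonneg (mul_nonneg (hP0 _ _ _) (hπ0 _ _))]
      _ = γ * ∑ s, ∑ s', ∑ a, P s' a s * π s' a * |e s'| := by rw [Finset.mul_sum]
      _ = γ * ∑ s', |e s'| := by rw [kernel_sum P π hP1 hπ1]
  have hLnn : 0 ≤ ∑ s, |e s| := Finset.sum_nonneg fun s _ ↦ abs_nonneg _
  have hL0 : ∑ s, |e s| = 0 := by nlinarith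
  have he0 : ∀ s, e s = 0 := by
    intro s
    have := (Finset.sum_eq_zero_iff_of_nonneg (fun s _ ↦ abs_nonneg (e s))).mp hL0
    exact abs_eq_zero.mp (this s (Finset.mem_univ s))
  have hdg : ∀ s, density P π η γ s = g s := fun s ↦ sub_eq_zero.mp (he0 s)
  intro s a
  have hocc : occupancy P π η γ s a = density P π η γ s * π s a := by
    unfold occupancy density
    rw [← tsum_mul_right]
    exact tsum_congr fun t ↦ by ring
  rw [hocc, hdg s, hfg s a, mul_comm]
end

section
/- The map from Bellman-flow-feasible occupancy measures to stationary policies, f ↦ π_f where π_f(a|s) = f(s,a)/∑_{a'} f(s,a'), is injective on the set of f with ∑_{a'} f(s,a') > 0 for all s: if two feasible f, g induce the same policy then f = g. (Uniqueness of the occupancy measure of a stationary policy.) -/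
theorem bellman_flow_policy_map_injective {S A : Type*} [Fintype S] [Fintype A]
    (P : S → A → S → ℝ) (η : S → ℝ) (γ : ℝ)
    (hγ0 : 0 < γ) (hγ1 : γ < 1)
    (hP0 : ∀ s a s', 0 ≤ P s a s') (hP1 : ∀ s a, ∑ s', P s a s' = 1)
    (hη0 : ∀ s, 0 < η s) (hη1 : ∑ s, η s = 1)
    (f g : S → A → ℝ)
    (hf0 : ∀ s a, 0 ≤ f s a)
    (hfBF : ∀ s : S, ∑ a, f s a = η s + γ * ∑ s', ∑ a, P s' a s * f s' a)
    (hg0 : ∀ s a, 0 ≤ g s a)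
    (hgBF : ∀ s : S, ∑ a, g s a = η s + γ * ∑ s', ∑ a, P s' a s * g s' a)
    (hfpos : ∀ s, 0 < ∑ a, f s a) (hgpos : ∀ s, 0 < ∑ a, g s a)
    -- f and g induce the same stationary policy
    (hsame : ∀ s a, f s a / ∑ a', f s a' = g s a / ∑ a', g s a') :
    f = g := by
  have hFne : ∀ s, (∑ a, f s a) ≠ 0 := fun s => (hfpos s).ne'
  have hGne : ∀ s, (∑ a, g s a) ≠ 0 := fun s => (hgpos s).ne'
  -- difference representation
  have hdiff : ∀ s a, f s a - g s a
      = (f s a / ∑ a', f s a') * ((∑ a', f s a') - (∑ a', g s a')) := by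
    intro s a
    rw [mul_sub, div_mul_cancel₀ _ (hFne s), hsame s a, div_mul_cancel₀ _ (hGne s)]
  set d : S → ℝ := fun s => (∑ a, f s a) - (∑ a, g s a) with hdd
  set w : S → S → ℝ := fun s' s => ∑ a, P s' a s * (f s' a / ∑ a', f s' a') with hww
  have hw0 : ∀ s' s, 0 ≤ w s' s := by
    intro s' s
    apply Finset.sum_nonneg
    intro a _
    exact mul_nonneg (hP0 _ _ _) (div_nonneg (hf0 _ _) (hfpos s').le)
  have hw1 : ∀ s', ∑ s, w s' s = 1 := by
    intro s'
    have : ∑ s, w s' s = ∑ a, (∑ s, P s' a s) * (f s' a / ∑ a', f s' a') := by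
      rw [Finset.sum_comm]
      apply Finset.sum_congr rfl
      intro a _
      rw [Finset.sum_mul]
    rw [this]
    have : ∑ a, (∑ s, P s' a s) * (f s' a / ∑ a', f s' a')
        = ∑ a, f s' a / ∑ a', f s' a' := by
      apply Finset.sum_congr rfl
      intro a _
      rw [hP1 s' a, one_mul]
    rw [this, ← Finset.sum_div, div_self (hFne s')]
  have hd : ∀ s, d s = γ * ∑ s', d s' * w s' s := by
    intro s
    have h1 : d s = γ * ((∑ s', ∑ a, P s' a s * f s' a) - (∑ s', ∑ a, P s' a s * g s' a)) := by
      simp only [hdd, hfBF s, hgBF s]; ring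
    rw [h1]
    congr 1
    rw [← Finset.sum_sub_distrib]
    apply Finset.sum_congr rfl
    intro s' _
    rw [← Finset.sum_sub_distrib, hww]
    simp only
    rw [Finset.mul_sum]
    apply Finset.sum_congr rfl
    intro a _
    rw [← mul_sub, hdiff s' a]
    ring
  -- total variation bound
  set T : ℝ := ∑ s, |d s| with hT
  have hTnn : 0 ≤ T := Finset.sum_nonneg fun s _ => abs_nonneg _
  have hbound : T ≤ γ * T := by
    have h1 : ∀ s, |d s| ≤ γ * ∑ s', |d s'| * w s' s := by
      intro s
      rw [hd s, abs_mul, abs_of_pos hγ0]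
      apply mul_le_mul_of_nonneg_left _ hγ0.le
      calc |∑ s', d s' * w s' s| ≤ ∑ s', |d s' * w s' s| := Finset.abs_sum_le_sum_abs _ _
        _ = ∑ s', |d s'| * w s' s := by
            apply Finset.sum_congr rfl
            intro s' _
            rw [abs_mul, abs_of_nonneg (hw0 s' s)]
    calc T ≤ ∑ s, γ * ∑ s', |d s'| * w s' s := Finset.sum_le_sum fun s _ => h1 s
      _ = γ * ∑ s, ∑ s', |d s'| * w s' s := by rw [Finset.mul_sum]
      _ = γ * ∑ s', |d s'| * ∑ s, w s' s := by
          rw [Finset.sum_comm]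
          congr 1
          exact Finset.sum_congr rfl fun s' _ => (Finset.mul_sum _ _ _).symm
      _ = γ * T := by
          congr 1
          exact Finset.sum_congr rfl fun s' _ => by rw [hw1 s', mul_one]
  have hT0 : T = 0 := by nlinarith
  have hdz : ∀ s, d s = 0 := by
    intro s
    have := (Finset.sum_eq_zero_iff_of_nonneg (fun s _ => abs_nonneg (d s))).mp hT0 s
      (Finset.mem_univ s)
    exact abs_eq_zero.mp this
  funext s a
  have := hdiff s a
  rw [show (∑ a', f s a') - (∑ a', g s a') = d s from rfl, hdz s, mul_zero] at this
  linarith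
end
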